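/- Let A be a real n×n matrix with spectral (operator) norm ‖A‖₂ < 1. Then det(I + A) > 0 and |log det(I + A) − tr(A) + (1/2) tr(A²)| ≤ (1/3) ‖A‖₂ ‖A‖_F² (1 − ‖A‖₂)^{−3}, where ‖A‖_F denotes the Frobenius norm. -/

import Mathlib

set_option maxHeartbeats 1000000
set_option synthInstance.maxHeartbeats 1000000

/-- The spectral (operator) norm of a real `n×n` matrix, i.e. the operator norm of the
induced map on Euclidean space. -/
noncomputable def specNorm {n : ℕ} (A : Matrix (Fin n) (Fin n) ℝ) : ℝ :=
  ‖Matrix.toEuclideanCLM (𝕜 := ℝ) A‖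

namespace S13
open Matrix Polynomial
variable {n : ℕ}

lemma specNorm_nonneg (A : Matrix (Fin n) (Fin n) ℝ) : 0 ≤ specNorm A := norm_nonneg _

lemma norm_sq_eq (y : Fin n → ℝ) : ‖(WithLp.equiv 2 (Fin n → ℝ)).symm y‖ ^ 2 = ∑ i, (y i) ^ 2 := by
  rw [EuclideanSpace.norm_eq, Real.sq_sqrt (by positivity)]
  simp [Real.norm_eq_abs, sq_abs]

lemma mulVec_sq_le (C : Matrix (Fin n) (Fin n) ℝ) (x : Fin n → ℝ) :
    ∑ i, (C.mulVec x i) ^ 2 ≤ specNorm C ^ 2 * ∑ i, (x i) ^ 2 := by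
  have h := (Matrix.toEuclideanCLM (𝕜 := ℝ) C).le_opNorm ((WithLp.equiv 2 (Fin n → ℝ)).symm x)
  have hkey : Matrix.toEuclideanCLM (𝕜 := ℝ) C ((WithLp.equiv 2 (Fin n → ℝ)).symm x)
      = (WithLp.equiv 2 (Fin n → ℝ)).symm (C.mulVec x) := by
    rfl
  rw [hkey] at h
  have := mul_self_le_mul_self (norm_nonneg _) h
  rw [← pow_two, ← pow_two] at this
  calc ∑ i, (C.mulVec x i) ^ 2 = ‖(WithLp.equiv 2 (Fin n → ℝ)).symm (C.mulVec x)‖ ^ 2 :=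
        (norm_sq_eq _).symm
    _ ≤ (specNorm C * ‖(WithLp.equiv 2 (Fin n → ℝ)).symm x‖) ^ 2 := this
    _ = specNorm C ^ 2 * ∑ i, (x i) ^ 2 := by rw [mul_pow, norm_sq_eq]


lemma frob_mul_le (C M : Matrix (Fin n) (Fin n) ℝ) :
    ∑ i, ∑ j, ((C * M) i j) ^ 2 ≤ specNorm C ^ 2 * ∑ i, ∑ j, (M i j) ^ 2 := by
  rw [Finset.sum_comm]
  have hcol : ∀ j, ∑ i, ((C * M) i j) ^ 2 ≤ specNorm C ^ 2 * ∑ i, (M i j) ^ 2 := by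
    intro j
    have hcM : (fun i => (C * M) i j) = C.mulVec (fun k => M k j) := by
      ext i; simp [Matrix.mul_apply, Matrix.mulVec, dotProduct]
    calc ∑ i, ((C * M) i j) ^ 2 = ∑ i, (C.mulVec (fun k => M k j) i) ^ 2 := by
          rw [← hcM]
      _ ≤ specNorm C ^ 2 * ∑ i, (M i j) ^ 2 := by
          simpa using mulVec_sq_le C (fun k => M k j)
  calc ∑ j, ∑ i, ((C * M) i j) ^ 2 ≤ ∑ j, specNorm C ^ 2 * ∑ i, (M i j) ^ 2 :=
        Finset.sum_le_sum fun j _ => hcol j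
    _ = specNorm C ^ 2 * ∑ i, ∑ j, (M i j) ^ 2 := by
        rw [← Finset.mul_sum, Finset.sum_comm]

lemma trace_mul_sq_le (X Y : Matrix (Fin n) (Fin n) ℝ) :
    (Matrix.trace (X * Y)) ^ 2 ≤ (∑ i, ∑ j, (X i j) ^ 2) * (∑ i, ∑ j, (Y i j) ^ 2) := by
  have h1 : Matrix.trace (X * Y) = ∑ p : Fin n × Fin n, X p.1 p.2 * Y p.2 p.1 := by
    rw [Fintype.sum_prod_type]
    simp [Matrix.trace, Matrix.diag, Matrix.mul_apply]
  have h2 := Finset.sum_mul_sq_le_sq_mul_sq Finset.univ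
      (fun p : Fin n × Fin n => X p.1 p.2) (fun p => Y p.2 p.1)
  rw [h1]
  calc (∑ p : Fin n × Fin n, X p.1 p.2 * Y p.2 p.1) ^ 2
      ≤ (∑ p : Fin n × Fin n, (X p.1 p.2) ^ 2) * (∑ p : Fin n × Fin n, (Y p.2 p.1) ^ 2) := h2
    _ = (∑ i, ∑ j, (X i j) ^ 2) * (∑ i, ∑ j, (Y i j) ^ 2) := by
        rw [Fintype.sum_prod_type, Fintype.sum_prod_type]
        congr 1
        exact Finset.sum_comm

lemma norm_inv_le {R : Type*} [NormedRing R] [CompleteSpace R] (h1 : ‖(1 : R)‖ ≤ 1)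
    {x b : R} (hx : ‖x‖ < 1) (hb : b * (1 - x) = 1) : ‖b‖ ≤ (1 - ‖x‖)⁻¹ := by
  have hsum : Summable fun i : ℕ => x ^ i := summable_geometric_of_norm_lt_one hx
  have hc : (∑' i : ℕ, x ^ i) * (1 - x) = 1 := geom_series_mul_neg x hx
  have hc' : (1 - x) * (∑' i : ℕ, x ^ i) = 1 := mul_neg_geom_series x hx
  have hbc : b = ∑' i : ℕ, x ^ i := by
    calc b = b * ((1 - x) * (∑' i : ℕ, x ^ i)) := by rw [hc', mul_one]
      _ = (b * (1 - x)) * (∑' i : ℕ, x ^ i) := by rw [mul_assoc]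
      _ = ∑' i : ℕ, x ^ i := by rw [hb, one_mul]
  have hpow : ∀ i : ℕ, ‖x ^ i‖ ≤ ‖x‖ ^ i := by
    intro i
    cases i with
    | zero => simpa using h1
    | succ m => exact norm_pow_le' x (Nat.succ_pos m)
  have hsn : Summable fun i : ℕ => ‖x ^ i‖ :=
    Summable.of_nonneg_of_le (fun i => norm_nonneg _) hpow
      (summable_geometric_of_lt_one (norm_nonneg x) hx)
  calc ‖b‖ = ‖∑' i : ℕ, x ^ i‖ := by rw [hbc]
    _ ≤ ∑' i : ℕ, ‖x ^ i‖ := norm_tsum_le_tsum_norm hsn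
    _ ≤ ∑' i : ℕ, ‖x‖ ^ i :=
        Summable.tsum_le_tsum hpow hsn (summable_geometric_of_lt_one (norm_nonneg x) hx)
    _ = (1 - ‖x‖)⁻¹ := tsum_geometric_of_lt_one (norm_nonneg x) hx



lemma specNorm_mul_le (X Y : Matrix (Fin n) (Fin n) ℝ) :
    specNorm (X * Y) ≤ specNorm X * specNorm Y := by
  show ‖Matrix.toEuclideanCLM (𝕜 := ℝ) (X * Y)‖ ≤ _
  rw [_root_.map_mul]
  exact norm_mul_le _ _

lemma phi_one_add_smul (t : ℝ) (A : Matrix (Fin n) (Fin n) ℝ) :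
    Matrix.toEuclideanCLM (𝕜 := ℝ) (1 + t • A)
      = 1 - (-(t • Matrix.toEuclideanCLM (𝕜 := ℝ) A)) := by
  rw [sub_neg_eq_add, _root_.map_add, _root_.map_one, _root_.map_smul]

lemma norm_neg_smul (t : ℝ) (ht : 0 ≤ t) (A : Matrix (Fin n) (Fin n) ℝ) :
    ‖-(t • Matrix.toEuclideanCLM (𝕜 := ℝ) A)‖ = t * specNorm A := by
  rw [norm_neg, norm_smul t (Matrix.toEuclideanCLM (𝕜 := ℝ) A), Real.norm_of_nonneg ht]; rfl

lemma isUnit_one_add_smul {t : ℝ} (ht : 0 ≤ t) {A : Matrix (Fin n) (Fin n) ℝ}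
    (hts : t * specNorm A < 1) : IsUnit (1 + t • A) := by
  set x := -(t • Matrix.toEuclideanCLM (𝕜 := ℝ) A) with hxdef
  have hx : ‖x‖ < 1 := by rw [norm_neg_smul t ht]; exact hts
  set u := Units.oneSub x hx with hudef
  have hφu : Matrix.toEuclideanCLM (𝕜 := ℝ) (1 + t • A) = (u : _) := phi_one_add_smul t A
  have hsymm : (Matrix.toEuclideanCLM (𝕜 := ℝ)).symm (u : _) = 1 + t • A := by
    rw [← hφu, StarAlgEquiv.symm_apply_apply]
  set b := (Matrix.toEuclideanCLM (𝕜 := ℝ) (n := Fin n)).symm (↑u⁻¹) with hbdef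
  have h1 : (1 + t • A) * b = 1 := by
    have := congrArg (Matrix.toEuclideanCLM (𝕜 := ℝ) (n := Fin n)).symm u.mul_inv
    rwa [_root_.map_mul, _root_.map_one, hsymm] at this
  have h2 : b * (1 + t • A) = 1 := by
    have := congrArg (Matrix.toEuclideanCLM (𝕜 := ℝ) (n := Fin n)).symm u.inv_mul
    rwa [_root_.map_mul, _root_.map_one, hsymm] at this
  exact ⟨⟨1 + t • A, b, h1, h2⟩, rfl⟩

lemma specNorm_inv_le {t : ℝ} (ht : 0 ≤ t) {A : Matrix (Fin n) (Fin n) ℝ}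
    (hts : t * specNorm A < 1) :
    specNorm ((1 + t • A)⁻¹) ≤ (1 - t * specNorm A)⁻¹ := by
  have hu := isUnit_one_add_smul ht hts
  have hmul : (1 + t • A)⁻¹ * (1 + t • A) = 1 :=
    Matrix.nonsing_inv_mul _ ((Matrix.isUnit_iff_isUnit_det _).mp hu)
  have := congrArg (Matrix.toEuclideanCLM (𝕜 := ℝ) (n := Fin n)) hmul
  rw [_root_.map_mul, _root_.map_one, phi_one_add_smul] at this
  have hx : ‖-(t • Matrix.toEuclideanCLM (𝕜 := ℝ) A)‖ < 1 := by
    rw [norm_neg_smul t ht]; exact hts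
  have hb := norm_inv_le ContinuousLinearMap.norm_id_le hx this
  rwa [norm_neg_smul t ht] at hb


lemma factor_lemma {t : ℝ} {A : Matrix (Fin n) (Fin n) ℝ} (hu : IsUnit ((1 : Matrix (Fin n) (Fin n) ℝ) + t • A)) (u : ℝ) :
    (1 : Matrix (Fin n) (Fin n) ℝ) + u • A
      = (1 + t • A) * (1 + (u - t) • ((1 + t • A)⁻¹ * A)) := by
  have h1 : ((1 : Matrix (Fin n) (Fin n) ℝ) + t • A) * (1 + t • A)⁻¹ = 1 :=
    Matrix.mul_nonsing_inv _ ((Matrix.isUnit_iff_isUnit_det _).mp hu)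
  have h2 : ((1 : Matrix (Fin n) (Fin n) ℝ) + t • A) * ((u - t) • ((1 + t • A)⁻¹ * A))
      = (u - t) • A := by
    rw [mul_smul_comm, ← mul_assoc, h1, one_mul]
  rw [mul_add, mul_one, h2, add_assoc, ← add_smul]
  ring_nf

lemma hasDerivAt_det {t : ℝ} {A : Matrix (Fin n) (Fin n) ℝ}
    (hu : IsUnit ((1 : Matrix (Fin n) (Fin n) ℝ) + t • A)) :
    HasDerivAt (fun u : ℝ => ((1 : Matrix (Fin n) (Fin n) ℝ) + u • A).det)
      (((1 : Matrix (Fin n) (Fin n) ℝ) + t • A).det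
        * Matrix.trace ((1 + t • A)⁻¹ * A)) t := by
  set M := ((1 : Matrix (Fin n) (Fin n) ℝ) + t • A)⁻¹ * A with hM
  set P := (Matrix.det (1 + (Polynomial.X : ℝ[X]) • M.map Polynomial.C)).divX.divX with hP
  have key : ∀ u : ℝ, ((1 : Matrix (Fin n) (Fin n) ℝ) + u • A).det
      = ((1 : Matrix (Fin n) (Fin n) ℝ) + t • A).det
        * (1 + Matrix.trace M * (u - t) + P.eval (u - t) * (u - t) ^ 2) := by
    intro u
    rw [factor_lemma hu u, Matrix.det_mul, Matrix.det_one_add_smul (u - t) M]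
  have hid : HasDerivAt (fun u : ℝ => u - t) 1 t := (hasDerivAt_id t).sub_const t
  have h2 : HasDerivAt (fun u : ℝ => Matrix.trace M * (u - t)) (Matrix.trace M) t := by
    simpa using hid.const_mul (Matrix.trace M)
  have h3 : HasDerivAt (fun u : ℝ => P.eval (u - t))
      ((P.comp (Polynomial.X - Polynomial.C t)).derivative.eval t) t := by
    have hd := Polynomial.hasDerivAt (P.comp (Polynomial.X - Polynomial.C t)) t
    have hfun : (fun u : ℝ => P.eval (u - t))
        = fun u : ℝ => (P.comp (Polynomial.X - Polynomial.C t)).eval u := by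
      funext u; simp [Polynomial.eval_comp]
    rw [hfun]; exact hd
  have h4 : HasDerivAt (fun u : ℝ => (u - t) ^ 2) 0 t := by
    have := hid.fun_pow 2
    simpa using this
  have h5 : HasDerivAt (fun u : ℝ => P.eval (u - t) * (u - t) ^ 2) 0 t := by
    have := h3.fun_mul h4
    simpa [sub_self] using this
  have h6 : HasDerivAt
      (fun u : ℝ => 1 + Matrix.trace M * (u - t) + P.eval (u - t) * (u - t) ^ 2)
      (Matrix.trace M) t := by
    have := ((hasDerivAt_const t (1:ℝ)).fun_add h2).fun_add h5
    simpa using this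
  have h7 := h6.const_mul (((1 : Matrix (Fin n) (Fin n) ℝ) + t • A).det)
  have hfun : (fun u : ℝ => ((1 : Matrix (Fin n) (Fin n) ℝ) + u • A).det)
      = fun u : ℝ => ((1 : Matrix (Fin n) (Fin n) ℝ) + t • A).det
        * (1 + Matrix.trace M * (u - t) + P.eval (u - t) * (u - t) ^ 2) := funext key
  rw [hfun]
  exact h7

lemma inv_expand {t : ℝ} {A : Matrix (Fin n) (Fin n) ℝ}
    (hu : IsUnit ((1 : Matrix (Fin n) (Fin n) ℝ) + t • A)) :
    ((1 : Matrix (Fin n) (Fin n) ℝ) + t • A)⁻¹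
      = 1 - t • A + (t ^ 2) • (A * A * ((1 : Matrix (Fin n) (Fin n) ℝ) + t • A)⁻¹) := by
  have hdet := (Matrix.isUnit_iff_isUnit_det _).mp hu
  set B := ((1 : Matrix (Fin n) (Fin n) ℝ) + t • A)⁻¹ with hB
  have hBr : ((1 : Matrix (Fin n) (Fin n) ℝ) + t • A) * B = 1 := Matrix.mul_nonsing_inv _ hdet
  have hBl : B * ((1 : Matrix (Fin n) (Fin n) ℝ) + t • A) = 1 := Matrix.nonsing_inv_mul _ hdet
  have hX : ((1 : Matrix (Fin n) (Fin n) ℝ) - t • A + (t ^ 2) • (A * A * B))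
      * (1 + t • A) = 1 := by
    have h1 : (A * A * B) * ((1 : Matrix (Fin n) (Fin n) ℝ) + t • A) = A * A := by
      rw [mul_assoc, hBl, mul_one]
    rw [add_mul, sub_mul, smul_mul_assoc, smul_mul_assoc, h1, one_mul, mul_add, mul_one,
      mul_smul_comm]
    module
  calc B = 1 * B := (one_mul B).symm
    _ = (((1 : Matrix (Fin n) (Fin n) ℝ) - t • A + (t ^ 2) • (A * A * B))
        * (1 + t • A)) * B := by rw [hX]
    _ = ((1 : Matrix (Fin n) (Fin n) ℝ) - t • A + (t ^ 2) • (A * A * B))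
        * ((1 + t • A) * B) := by rw [mul_assoc]
    _ = 1 - t • A + (t ^ 2) • (A * A * B) := by rw [hBr, mul_one]
  
lemma trace_expand {t : ℝ} {A : Matrix (Fin n) (Fin n) ℝ}
    (hu : IsUnit ((1 : Matrix (Fin n) (Fin n) ℝ) + t • A)) :
    Matrix.trace (((1 : Matrix (Fin n) (Fin n) ℝ) + t • A)⁻¹ * A)
      = Matrix.trace A - t * Matrix.trace (A * A)
        + t ^ 2 * Matrix.trace (A * ((A * ((1 + t • A)⁻¹)) * A)) := by
  conv_lhs => rw [inv_expand hu]
  rw [add_mul, sub_mul, smul_mul_assoc, smul_mul_assoc, one_mul]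
  rw [Matrix.trace_add, Matrix.trace_sub, Matrix.trace_smul, Matrix.trace_smul]
  rw [smul_eq_mul, smul_eq_mul]
  congr 2
  simp [mul_assoc]


end S13

/-- Lemma of Davies: if `‖A‖₂ < 1` then `det(I + A) > 0` and
`|log det(I+A) − tr A + (1/2) tr(A²)| ≤ (1/3)‖A‖₂ ‖A‖_F² (1 − ‖A‖₂)^{−3}`. -/
theorem stmt13 {n : ℕ} (A : Matrix (Fin n) (Fin n) ℝ) (hA : specNorm A < 1) :
    0 < (1 + A).det ∧
      |Real.log (1 + A).det - A.trace + (1 / 2) * (A * A).trace| ≤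
        (1 / 3) * specNorm A * (∑ i, ∑ j, (A i j) ^ 2) / (1 - specNorm A) ^ 3 := by
  classical
  have hs0 : 0 ≤ specNorm A := norm_nonneg _
  have h1s : 0 < 1 - specNorm A := by linarith
  have hF0 : 0 ≤ ∑ i, ∑ j, (A i j) ^ 2 := by positivity
  have hunit : ∀ t ∈ Set.Icc (0:ℝ) 1, IsUnit ((1 : Matrix (Fin n) (Fin n) ℝ) + t • A) := by
    intro t ht
    refine S13.isUnit_one_add_smul ht.1 (lt_of_le_of_lt ?_ hA)
    nlinarith [ht.1, ht.2, hs0]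
  have hdetu : ∀ t ∈ Set.Icc (0:ℝ) 1,
      IsUnit ((1 : Matrix (Fin n) (Fin n) ℝ) + t • A).det := fun t ht =>
    (Matrix.isUnit_iff_isUnit_det _).mp (hunit t ht)
  have hmc : Continuous (fun t : ℝ => (1 : Matrix (Fin n) (Fin n) ℝ) + t • A) :=
    continuous_const.add (continuous_id.smul continuous_const)
  have hgc : Continuous (fun t : ℝ => ((1 : Matrix (Fin n) (Fin n) ℝ) + t • A).det) :=
    hmc.matrix_det
  have hgne : ∀ t ∈ Set.Icc (0:ℝ) 1,
      ((1 : Matrix (Fin n) (Fin n) ℝ) + t • A).det ≠ 0 := fun t ht => (hdetu t ht).ne_zero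
  have hg0 : ((1 : Matrix (Fin n) (Fin n) ℝ) + (0:ℝ) • A).det = 1 := by simp
  have hgpos : ∀ t ∈ Set.Icc (0:ℝ) 1,
      0 < ((1 : Matrix (Fin n) (Fin n) ℝ) + t • A).det := by
    intro t ht
    by_contra hle
    have hlt : ((1 : Matrix (Fin n) (Fin n) ℝ) + t • A).det < 0 :=
      lt_of_le_of_ne (not_lt.mp hle) (hgne t ht)
    have hsub := intermediate_value_Icc' ht.1
      (hgc.continuousOn : ContinuousOn _ (Set.Icc 0 t))
    have h0mem : (0:ℝ) ∈ Set.Icc (((1 : Matrix (Fin n) (Fin n) ℝ) + t • A).det)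
        (((1 : Matrix (Fin n) (Fin n) ℝ) + (0:ℝ) • A).det) := by
      rw [hg0]; exact ⟨le_of_lt hlt, zero_le_one⟩
    obtain ⟨c, hc, hc0⟩ := hsub h0mem
    exact hgne c ⟨hc.1, hc.2.trans ht.2⟩ hc0
  have hdetpos : 0 < (1 + A).det := by
    have := hgpos 1 ⟨zero_le_one, le_refl 1⟩
    simpa using this
  refine ⟨hdetpos, ?_⟩
  -- continuity of the matrix inverse along the path
  have hBc : ContinuousOn (fun t : ℝ => ((1 : Matrix (Fin n) (Fin n) ℝ) + t • A)⁻¹)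
      (Set.Icc 0 1) := by
    intro t ht
    have hinv : ContinuousAt Inv.inv ((1 : Matrix (Fin n) (Fin n) ℝ) + t • A) := by
      refine continuousAt_matrix_inv _ ?_
      have : (Ring.inverse : ℝ → ℝ) = Inv.inv := Ring.inverse_eq_inv'
      rw [this]
      exact continuousAt_inv₀ (hgne t ht)
    exact (ContinuousAt.comp (f := fun t : ℝ => (1 : Matrix (Fin n) (Fin n) ℝ) + t • A)
      hinv hmc.continuousAt).continuousWithinAt
  have hhc : ContinuousOn
      (fun t : ℝ => Matrix.trace (((1 : Matrix (Fin n) (Fin n) ℝ) + t • A)⁻¹ * A))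
      (Set.Icc 0 1) := by
    have houter : Continuous fun M : Matrix (Fin n) (Fin n) ℝ => Matrix.trace (M * A) :=
      (continuous_id.matrix_mul continuous_const).matrix_trace
    exact houter.comp_continuousOn hBc
  have hrc : ContinuousOn
      (fun t : ℝ => Matrix.trace (A * ((A * (((1 : Matrix (Fin n) (Fin n) ℝ) + t • A)⁻¹)) * A)))
      (Set.Icc 0 1) := by
    have houter : Continuous fun M : Matrix (Fin n) (Fin n) ℝ =>
        Matrix.trace (A * ((A * M) * A)) :=
      (continuous_const.matrix_mul
        (((continuous_const.matrix_mul continuous_id)).matrix_mul continuous_const)).matrix_trace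
    exact houter.comp_continuousOn hBc
  have huIcc : Set.uIcc (0:ℝ) 1 = Set.Icc 0 1 := Set.uIcc_of_le zero_le_one
  have hint : IntervalIntegrable
      (fun t : ℝ => Matrix.trace (((1 : Matrix (Fin n) (Fin n) ℝ) + t • A)⁻¹ * A))
      MeasureTheory.volume 0 1 := by
    apply ContinuousOn.intervalIntegrable
    rwa [huIcc]
  have hderiv : ∀ t ∈ Set.Icc (0:ℝ) 1,
      HasDerivAt (fun u : ℝ => Real.log (((1 : Matrix (Fin n) (Fin n) ℝ) + u • A).det))
        (Matrix.trace (((1 : Matrix (Fin n) (Fin n) ℝ) + t • A)⁻¹ * A)) t := by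
    intro t ht
    have h1 := (S13.hasDerivAt_det (hunit t ht)).log (hgne t ht)
    rwa [mul_div_cancel_left₀ _ (hgne t ht)] at h1
  have hftc : ∫ t in (0:ℝ)..1,
      Matrix.trace (((1 : Matrix (Fin n) (Fin n) ℝ) + t • A)⁻¹ * A)
      = Real.log ((1 + A).det) := by
    rw [intervalIntegral.integral_eq_sub_of_hasDerivAt
      (fun t ht => hderiv t (by rwa [huIcc] at ht)) hint]
    simp [hg0]
  -- pointwise bound on the remainder trace
  have hrb : ∀ t ∈ Set.Icc (0:ℝ) 1,
      |Matrix.trace (A * ((A * (((1 : Matrix (Fin n) (Fin n) ℝ) + t • A)⁻¹)) * A))|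
        ≤ specNorm A / (1 - specNorm A) * ∑ i, ∑ j, (A i j) ^ 2 := by
    intro t ht
    set B := ((1 : Matrix (Fin n) (Fin n) ℝ) + t • A)⁻¹ with hB
    have hts : t * specNorm A < 1 := lt_of_le_of_lt (by nlinarith [ht.1, ht.2, hs0]) hA
    have hBn : specNorm B ≤ (1 - t * specNorm A)⁻¹ := S13.specNorm_inv_le ht.1 hts
    have hABn : specNorm (A * B) ≤ specNorm A / (1 - specNorm A) := by
      have h1 := S13.specNorm_mul_le A B
      have h2 : (1 - t * specNorm A)⁻¹ ≤ (1 - specNorm A)⁻¹ := by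
        apply inv_anti₀ h1s
        nlinarith [ht.1, ht.2, hs0]
      calc specNorm (A * B) ≤ specNorm A * specNorm B := h1
        _ ≤ specNorm A * (1 - specNorm A)⁻¹ := by
            apply mul_le_mul_of_nonneg_left (hBn.trans h2) hs0
        _ = specNorm A / (1 - specNorm A) := by rw [div_eq_mul_inv]
    have hK0 : 0 ≤ specNorm A / (1 - specNorm A) := by positivity
    have hsq : (Matrix.trace (A * ((A * B) * A))) ^ 2
        ≤ ((specNorm A / (1 - specNorm A)) * ∑ i, ∑ j, (A i j) ^ 2) ^ 2 := by
      have h1 := S13.trace_mul_sq_le A ((A * B) * A)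
      have h2 := S13.frob_mul_le (A * B) A
      have h3 : specNorm (A * B) ^ 2 ≤ (specNorm A / (1 - specNorm A)) ^ 2 := by
        apply pow_le_pow_left₀ (norm_nonneg _) hABn
      calc (Matrix.trace (A * ((A * B) * A))) ^ 2
          ≤ (∑ i, ∑ j, (A i j) ^ 2) * ∑ i, ∑ j, ((A * B * A) i j) ^ 2 := h1
        _ ≤ (∑ i, ∑ j, (A i j) ^ 2) * (specNorm (A * B) ^ 2 * ∑ i, ∑ j, (A i j) ^ 2) :=
            mul_le_mul_of_nonneg_left h2 hF0
        _ ≤ (∑ i, ∑ j, (A i j) ^ 2)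
            * ((specNorm A / (1 - specNorm A)) ^ 2 * ∑ i, ∑ j, (A i j) ^ 2) :=
            mul_le_mul_of_nonneg_left (mul_le_mul_of_nonneg_right h3 hF0) hF0
        _ = ((specNorm A / (1 - specNorm A)) * ∑ i, ∑ j, (A i j) ^ 2) ^ 2 := by ring
    calc |Matrix.trace (A * ((A * B) * A))|
        = Real.sqrt ((Matrix.trace (A * ((A * B) * A))) ^ 2) := (Real.sqrt_sq_eq_abs _).symm
      _ ≤ Real.sqrt (((specNorm A / (1 - specNorm A)) * ∑ i, ∑ j, (A i j) ^ 2) ^ 2) :=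
          Real.sqrt_le_sqrt hsq
      _ = specNorm A / (1 - specNorm A) * ∑ i, ∑ j, (A i j) ^ 2 :=
          Real.sqrt_sq (by positivity)
  -- the integral identity
  have hcont_lin : Continuous (fun t : ℝ => A.trace - t * (A * A).trace) :=
    continuous_const.sub (continuous_id.mul continuous_const)
  have hint_lin : IntervalIntegrable (fun t : ℝ => A.trace - t * (A * A).trace)
      MeasureTheory.volume 0 1 := hcont_lin.intervalIntegrable _ _
  have hEqOn : ∀ t ∈ Set.Icc (0:ℝ) 1,
      Matrix.trace (((1 : Matrix (Fin n) (Fin n) ℝ) + t • A)⁻¹ * A)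
        - (A.trace - t * (A * A).trace)
      = t ^ 2 * Matrix.trace (A * ((A * (((1 : Matrix (Fin n) (Fin n) ℝ) + t • A)⁻¹)) * A)) := by
    intro t ht
    rw [S13.trace_expand (hunit t ht)]
    ring
  have hIdent : Real.log ((1 + A).det) - A.trace + (1 / 2) * (A * A).trace
      = ∫ t in (0:ℝ)..1,
          t ^ 2 * Matrix.trace (A * ((A * (((1 : Matrix (Fin n) (Fin n) ℝ) + t • A)⁻¹)) * A)) := by
    have hsub : ∫ t in (0:ℝ)..1,
        (Matrix.trace (((1 : Matrix (Fin n) (Fin n) ℝ) + t • A)⁻¹ * A)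
          - (A.trace - t * (A * A).trace))
        = (∫ t in (0:ℝ)..1, Matrix.trace (((1 : Matrix (Fin n) (Fin n) ℝ) + t • A)⁻¹ * A))
          - ∫ t in (0:ℝ)..1, (A.trace - t * (A * A).trace) :=
      intervalIntegral.integral_sub hint hint_lin
    have hlin : ∫ t in (0:ℝ)..1, (A.trace - t * (A * A).trace)
        = A.trace - (1/2) * (A * A).trace := by
      have hmul : IntervalIntegrable (fun t : ℝ => t * (A * A).trace)
          MeasureTheory.volume 0 1 := by
        apply Continuous.intervalIntegrable
        exact continuous_id.mul continuous_const
      rw [intervalIntegral.integral_sub intervalIntegrable_const hmul,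
        intervalIntegral.integral_mul_const, integral_id, intervalIntegral.integral_const]
      norm_num
    have hcongr : ∫ t in (0:ℝ)..1,
        (Matrix.trace (((1 : Matrix (Fin n) (Fin n) ℝ) + t • A)⁻¹ * A)
          - (A.trace - t * (A * A).trace))
        = ∫ t in (0:ℝ)..1,
          t ^ 2 * Matrix.trace (A * ((A * (((1 : Matrix (Fin n) (Fin n) ℝ) + t • A)⁻¹)) * A)) := by
      apply intervalIntegral.integral_congr
      intro t ht
      rw [huIcc] at ht
      exact hEqOn t ht
    rw [← hcongr, hsub, hftc, hlin]
    ring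
  rw [hIdent]
  -- final bound
  have hbound2 : ∀ t ∈ Set.Icc (0:ℝ) 1,
      ‖t ^ 2 * Matrix.trace (A * ((A * (((1 : Matrix (Fin n) (Fin n) ℝ) + t • A)⁻¹)) * A))‖
        ≤ (specNorm A / (1 - specNorm A) * ∑ i, ∑ j, (A i j) ^ 2) * t ^ 2 := by
    intro t ht
    rw [Real.norm_eq_abs, abs_mul, abs_pow, abs_of_nonneg ht.1]
    have := hrb t ht
    nlinarith [sq_nonneg t, abs_nonneg (Matrix.trace (A * ((A * (((1 : Matrix (Fin n) (Fin n) ℝ) + t • A)⁻¹)) * A)))]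
  have habs : |∫ t in (0:ℝ)..1,
      t ^ 2 * Matrix.trace (A * ((A * (((1 : Matrix (Fin n) (Fin n) ℝ) + t • A)⁻¹)) * A))|
      ≤ (specNorm A / (1 - specNorm A) * ∑ i, ∑ j, (A i j) ^ 2) * (1/3) := by
    have h1 := intervalIntegral.norm_integral_le_integral_norm (f := fun t : ℝ =>
      t ^ 2 * Matrix.trace (A * ((A * (((1 : Matrix (Fin n) (Fin n) ℝ) + t • A)⁻¹)) * A)))
      (μ := MeasureTheory.volume) (a := 0) (b := 1) zero_le_one
    have hIntNorm : IntervalIntegrable (fun t : ℝ =>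
        ‖t ^ 2 * Matrix.trace (A * ((A * (((1 : Matrix (Fin n) (Fin n) ℝ) + t • A)⁻¹)) * A))‖)
        MeasureTheory.volume 0 1 := by
      apply ContinuousOn.intervalIntegrable
      rw [huIcc]
      exact ((continuous_pow 2).continuousOn.mul hrc).norm
    have hIntMaj : IntervalIntegrable (fun t : ℝ =>
        (specNorm A / (1 - specNorm A) * ∑ i, ∑ j, (A i j) ^ 2) * t ^ 2)
        MeasureTheory.volume 0 1 :=
      (continuous_const.mul (continuous_pow 2)).intervalIntegrable _ _
    have h2 : ∫ t in (0:ℝ)..1,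
        ‖t ^ 2 * Matrix.trace (A * ((A * (((1 : Matrix (Fin n) (Fin n) ℝ) + t • A)⁻¹)) * A))‖
        ≤ ∫ t in (0:ℝ)..1,
          (specNorm A / (1 - specNorm A) * ∑ i, ∑ j, (A i j) ^ 2) * t ^ 2 := by
      apply intervalIntegral.integral_mono_on zero_le_one hIntNorm hIntMaj
      exact hbound2
    have h3 : ∫ t in (0:ℝ)..1,
        (specNorm A / (1 - specNorm A) * ∑ i, ∑ j, (A i j) ^ 2) * t ^ 2
        = (specNorm A / (1 - specNorm A) * ∑ i, ∑ j, (A i j) ^ 2) * (1/3) := by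
      rw [intervalIntegral.integral_const_mul, integral_pow]
      norm_num
    rw [← Real.norm_eq_abs]
    calc ‖_‖ ≤ _ := h1
      _ ≤ _ := h2
      _ = _ := by rw [h3]
  refine habs.trans ?_
  -- arithmetic: s/(1-s) * F * (1/3) ≤ (1/3) * s * F / (1-s)^3
  have hpow : (1 - specNorm A) ^ 3 ≤ 1 - specNorm A := by
    calc (1 - specNorm A) ^ 3 ≤ (1 - specNorm A) ^ 1 :=
          pow_le_pow_of_le_one (le_of_lt h1s) (by linarith) (by norm_num)
      _ = 1 - specNorm A := pow_one _
  have hp3 : 0 < (1 - specNorm A) ^ 3 := by positivity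
  have hinv : (1 - specNorm A)⁻¹ ≤ ((1 - specNorm A) ^ 3)⁻¹ :=
    inv_anti₀ hp3 hpow
  calc (specNorm A / (1 - specNorm A) * ∑ i, ∑ j, (A i j) ^ 2) * (1 / 3)
      = (specNorm A * (∑ i, ∑ j, (A i j) ^ 2) * (1 / 3)) * (1 - specNorm A)⁻¹ := by ring
    _ ≤ (specNorm A * (∑ i, ∑ j, (A i j) ^ 2) * (1 / 3)) * ((1 - specNorm A) ^ 3)⁻¹ :=
        mul_le_mul_of_nonneg_left hinv (by positivity)
    _ = (1 / 3) * specNorm A * (∑ i, ∑ j, (A i j) ^ 2) / (1 - specNorm A) ^ 3 := by ring
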